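/- Let n be odd. Then Σ_{2a+b+c=(n-1)/2} multinom((n-1)/2; a,a,b,c) + Σ_{2a-1+b+c=(n-1)/2} multinom((n-1)/2; a,a-1,b,c) = C(n, (n+1)/2), where sums range over nonnegative integers (with a ≥ 1 in the second sum). -/

import Mathlib

open scoped Classical

private lemma sum_ite_add_eq' (F : ℕ → ℕ) (k N M : ℕ) :
    ∑ c ∈ Finset.range N, (if k + c = M then F c else 0)
      = if k ≤ M ∧ M - k < N then F (M - k) else 0 := by
  split_ifs with h
  · rw [Finset.sum_eq_single (M - k)]
    · rw [if_pos (by omega)]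
    · intro c _ hne; rw [if_neg (by omega)]
    · intro h'; simp only [Finset.mem_range] at h'; omega
  · apply Finset.sum_eq_zero; intro c hc
    simp only [Finset.mem_range] at hc
    rw [if_neg (by omega)]

private lemma sum_choose_ite' (t N : ℕ) (h : t < N) :
    ∑ b ∈ Finset.range N, (if b ≤ t then t.choose b else 0) = 2 ^ t := by
  rw [← Finset.sum_subset (Finset.range_subset_range.2 (by omega : t + 1 ≤ N))
    (fun x _ hx => by rw [if_neg (by simp only [Finset.mem_range] at hx; omega)])]
  rw [← Nat.sum_range_choose t]
  refine Finset.sum_congr rfl fun b hb => ?_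
  simp only [Finset.mem_range] at hb
  rw [if_pos (by omega)]

private lemma mult4' (w x y z : ℕ) :
    Nat.multinomial Finset.univ ![w, x, y, z]
      = (w + (x + (y + z))).choose w * ((x + (y + z)).choose x * ((y + z).choose y)) := by
  have huniv : (Finset.univ : Finset (Fin 4)) = {0, 1, 2, 3} := by decide
  rw [huniv]
  rw [Nat.multinomial_insert (by decide), Nat.multinomial_insert (by decide),
    Nat.multinomial_insert (by decide)]
  simp [Finset.sum_insert, Matrix.cons_val_zero, Matrix.cons_val_one]

open Polynomial in
private lemma expand_key' (m k : ℕ) :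
    ∑ a ∈ Finset.range (m+1), ∑ b ∈ Finset.range (m - a + 1),
      (if 2*a + b = k then m.choose a * ((m-a).choose b * 2^b) else 0) = (2*m).choose k := by
  have key : ((X + 1 : ℕ[X])) ^ (2*m) =
      ∑ a ∈ Finset.range (m+1), ∑ b ∈ Finset.range (m - a + 1),
        Polynomial.C (m.choose a * ((m-a).choose b * 2^b)) * X ^ (2*a + b) := by
    have h2 : ((X + 1 : ℕ[X])) ^ (2*m) = ((X:ℕ[X])^2 + (2*X+1)) ^ m := by
      rw [pow_mul]
      congr 1
      ring
    rw [h2, add_pow]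
    refine Finset.sum_congr rfl fun a ha => ?_
    rw [add_pow, Finset.mul_sum, Finset.sum_mul]
    refine Finset.sum_congr rfl fun b hb => ?_
    simp only [one_pow, mul_one, Polynomial.C_mul, Polynomial.C_pow, map_ofNat,
      ← Polynomial.C_eq_natCast, Nat.cast_id]
    ring
  have hc := congrArg (fun p : ℕ[X] => p.coeff k) key
  simp only [Polynomial.coeff_X_add_one_pow, Polynomial.finset_sum_coeff,
    Polynomial.coeff_C_mul, Polynomial.coeff_X_pow, mul_ite, mul_one, mul_zero,
    Nat.cast_id] at hc
  rw [hc]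
  exact Finset.sum_congr rfl fun a _ => Finset.sum_congr rfl fun b _ =>
    if_congr eq_comm rfl rfl

private lemma L1' (m : ℕ) :
    (∑ a ∈ Finset.range (m + 1), ∑ b ∈ Finset.range (m + 1), ∑ c ∈ Finset.range (m + 1),
      if 2 * a + b + c = m then Nat.multinomial Finset.univ ![a, a, b, c] else 0)
    = (2*m).choose m := by
  rw [← expand_key' m m]
  refine Finset.sum_congr rfl fun a ha => ?_
  simp only [Finset.mem_range] at ha
  by_cases h2a : 2*a ≤ m
  · have hL : ∀ b ∈ Finset.range (m+1),
        (∑ c ∈ Finset.range (m + 1),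
          if 2 * a + b + c = m then Nat.multinomial Finset.univ ![a, a, b, c] else 0)
        = if b ≤ m - 2*a then m.choose a * (m-a).choose a * (m-2*a).choose b else 0 := by
      intro b _
      rw [sum_ite_add_eq' (fun c => Nat.multinomial Finset.univ ![a, a, b, c]) (2*a+b) (m+1) m]
      split_ifs with h1 h2
      · rw [mult4', show b + (m - (2*a+b)) = m - 2*a from by omega,
          show a + (a + (m - 2*a)) = m from by omega,
          show a + (m - 2*a) = m - a from by omega]
        ring
      · omega
      · omega
      · rfl
    rw [Finset.sum_congr rfl hL,
      sum_ite_add_eq' (fun b => m.choose a * ((m-a).choose b * 2^b)) (2*a) (m-a+1) m,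
      if_pos ⟨h2a, by omega⟩]
    have hsym : (m-a).choose (m - 2*a) = (m-a).choose a := by
      rw [show m - 2*a = (m-a) - a from by omega]
      exact Nat.choose_symm (by omega)
    rw [hsym]
    have hfac : ∀ b, (if b ≤ m - 2*a then m.choose a * (m-a).choose a * (m-2*a).choose b else 0)
        = m.choose a * (m-a).choose a * (if b ≤ m - 2*a then (m-2*a).choose b else 0) :=
      fun b => by split_ifs <;> simp
    rw [Finset.sum_congr rfl (fun b _ => hfac b), ← Finset.mul_sum,
      sum_choose_ite' _ _ (by omega)]
    ring
  · rw [Finset.sum_eq_zero, Finset.sum_eq_zero]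
    · intro b hb
      simp only [Finset.mem_range] at hb
      rw [if_neg (by omega)]
    · intro b _
      apply Finset.sum_eq_zero
      intro c _
      rw [if_neg (by omega)]

private lemma L2' (m : ℕ) :
    (∑ a ∈ Finset.range (m + 1), ∑ b ∈ Finset.range (m + 1), ∑ c ∈ Finset.range (m + 1),
      if 1 ≤ a ∧ 2 * a + b + c = m + 1 then Nat.multinomial Finset.univ ![a, a - 1, b, c] else 0)
    = (2*m).choose (m+1) := by
  rw [← expand_key' m (m+1)]
  refine Finset.sum_congr rfl fun a ha => ?_
  simp only [Finset.mem_range] at ha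
  by_cases hcase : 1 ≤ a ∧ 2*a ≤ m+1
  · obtain ⟨ha1, ha2⟩ := hcase
    have hL : ∀ b ∈ Finset.range (m+1),
        (∑ c ∈ Finset.range (m + 1),
          if 1 ≤ a ∧ 2 * a + b + c = m + 1 then Nat.multinomial Finset.univ ![a, a - 1, b, c] else 0)
        = if b ≤ m + 1 - 2*a then m.choose a * (m-a).choose (a-1) * (m+1-2*a).choose b else 0 := by
      intro b _
      simp only [show (1 ≤ a) = True from eq_true ha1, true_and]
      rw [sum_ite_add_eq' (fun c => Nat.multinomial Finset.univ ![a, a-1, b, c]) (2*a+b) (m+1) (m+1)]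
      split_ifs with h1 h2
      · rw [mult4', show b + (m + 1 - (2*a+b)) = m + 1 - 2*a from by omega,
          show a + (a - 1 + (m + 1 - 2*a)) = m from by omega,
          show a - 1 + (m + 1 - 2*a) = m - a from by omega]
        ring
      · omega
      · omega
      · rfl
    rw [Finset.sum_congr rfl hL,
      sum_ite_add_eq' (fun b => m.choose a * ((m-a).choose b * 2^b)) (2*a) (m-a+1) (m+1),
      if_pos ⟨by omega, by omega⟩]
    have hsym : (m-a).choose (m + 1 - 2*a) = (m-a).choose (a-1) := by
      rw [show m + 1 - 2*a = (m-a) - (a-1) from by omega]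
      exact Nat.choose_symm (by omega)
    rw [hsym]
    have hfac : ∀ b, (if b ≤ m + 1 - 2*a then m.choose a * (m-a).choose (a-1) * (m+1-2*a).choose b else 0)
        = m.choose a * (m-a).choose (a-1) * (if b ≤ m + 1 - 2*a then (m+1-2*a).choose b else 0) :=
      fun b => by split_ifs <;> simp
    rw [Finset.sum_congr rfl (fun b _ => hfac b), ← Finset.mul_sum,
      sum_choose_ite' _ _ (by omega)]
    ring
  · rw [Finset.sum_eq_zero, Finset.sum_eq_zero]
    · intro b hb
      simp only [Finset.mem_range] at hb
      rw [if_neg (by omega)]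
    · intro b _
      apply Finset.sum_eq_zero
      intro c _
      rw [if_neg (by omega)]

theorem multinomial_sum_odd (n m : ℕ) (hm : n = 2 * m + 1) :
    (∑ a ∈ Finset.range (m + 1), ∑ b ∈ Finset.range (m + 1), ∑ c ∈ Finset.range (m + 1),
      if 2 * a + b + c = m then Nat.multinomial Finset.univ ![a, a, b, c] else 0) +
    (∑ a ∈ Finset.range (m + 1), ∑ b ∈ Finset.range (m + 1), ∑ c ∈ Finset.range (m + 1),
      if 1 ≤ a ∧ 2 * a + b + c = m + 1 then Nat.multinomial Finset.univ ![a, a - 1, b, c] else 0)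
    = n.choose (m + 1) := by
  subst hm
  rw [L1' m, L2' m, Nat.choose_succ_succ]
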